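/- Under an exchangeable lineage model at a node v of a species tree, let the lineages entering v partition a clade A into blocks A_1,...,A_k with a ∈ A_1 and b ∈ A_2, and let C be a nonempty set of taxa disjoint from A. Then the map sending a subset S ⊆ A∖{a,b} with S∪{a} a union of A_1 and some other blocks (excluding A_2) to the subset S' with S'∪{b} equal to the union of A_2 and the same other blocks, is a bijection between the subsets contributing nonzero terms to Σ_{S⊆A'} P(S_g∪{A}∪C_g | π) and those contributing to Σ_{S⊆A'} P(S_g∪{B}∪C_g | π), with equal corresponding probabilities; hence these two conditional sums are equal. -/

import Mathlib

variable {α : Type} [DecidableEq α]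

/-- The swap map: given `S` with `S ∪ {a}` a union of blocks including `A₁ ∋ a`,
replace the block `A₁` by `A₂` and remove `b ∈ A₂`. -/
def swapMap (a b : α) (A₁ A₂ : Finset α) (S : Finset α) : Finset α :=
  ((insert a S \ A₁) ∪ A₂).erase b

lemma sup_erase_of_disjoint (J : Finset (Finset α)) (A₁ : Finset α) (hA₁J : A₁ ∈ J)
    (hd : ∀ B ∈ J, B ≠ A₁ → Disjoint A₁ B) :
    J.sup id \ A₁ = (J.erase A₁).sup id := by
  have hdj : Disjoint A₁ ((J.erase A₁).sup id) := by
    rw [Finset.disjoint_sup_right]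
    intro B hB
    exact hd B (Finset.mem_of_mem_erase hB) (Finset.ne_of_mem_erase hB)
  conv_lhs => rw [← Finset.insert_erase hA₁J]
  rw [Finset.sup_insert, id, Finset.sup_eq_union]
  exact Finset.union_sdiff_cancel_left hdj

lemma key_aux (blocks : Finset (Finset α))
    (hdisj : ∀ B₁ ∈ blocks, ∀ B₂ ∈ blocks, B₁ ≠ B₂ → Disjoint B₁ B₂)
    (a b : α) (A₁ A₂ : Finset α) (hA₁ : A₁ ∈ blocks) (hbA₂ : b ∈ A₂)
    (S : Finset α) (J : Finset (Finset α)) (hJ : J ⊆ blocks) (hA₁J : A₁ ∈ J)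
    (hS : insert a S = J.sup id) :
    insert b (swapMap a b A₁ A₂ S) = (insert A₂ (J.erase A₁)).sup id := by
  have h1 : insert a S \ A₁ = (J.erase A₁).sup id := by
    rw [hS]
    exact sup_erase_of_disjoint J A₁ hA₁J
      (fun B hB hne => hdisj A₁ hA₁ B (hJ hB) (Ne.symm hne))
  have hb : b ∈ (insert a S \ A₁) ∪ A₂ := Finset.mem_union_right _ hbA₂
  rw [swapMap, Finset.insert_erase hb, h1, Finset.sup_insert, id, Finset.sup_eq_union,
    Finset.union_comm]

lemma pack_aux (A : Finset α) (blocks : Finset (Finset α))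
    (hdisj : ∀ B₁ ∈ blocks, ∀ B₂ ∈ blocks, B₁ ≠ B₂ → Disjoint B₁ B₂)
    (hcover : blocks.sup id = A)
    (a b : α) (A₁ A₂ : Finset α) (hA₁ : A₁ ∈ blocks) (hA₂ : A₂ ∈ blocks)
    (hA₁₂ : A₁ ≠ A₂) (haA₁ : a ∈ A₁) (hbA₂ : b ∈ A₂)
    (S : Finset α) (hS : S ⊆ A \ {a, b})
    (J : Finset (Finset α)) (hJ : J ⊆ blocks.erase A₂) (hA₁J : A₁ ∈ J)
    (hSJ : insert a S = J.sup id) :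
    swapMap a b A₁ A₂ S ⊆ A \ {a, b} ∧
    insert b (swapMap a b A₁ A₂ S) = (insert A₂ (J.erase A₁)).sup id ∧
    insert A₂ (J.erase A₁) ⊆ blocks.erase A₁ ∧
    swapMap b a A₂ A₁ (swapMap a b A₁ A₂ S) = S := by
  have hJb : J ⊆ blocks := hJ.trans (Finset.erase_subset _ _)
  have hA₂J : A₂ ∉ J := fun h => (Finset.mem_erase.mp (hJ h)).1 rfl
  have heq := key_aux blocks hdisj a b A₁ A₂ hA₁ hbA₂ S J hJb hA₁J hSJ
  have haA₂ : a ∉ A₂ := fun h =>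
    (Finset.disjoint_left.mp (hdisj A₁ hA₁ A₂ hA₂ hA₁₂)) haA₁ h
  have hbS' : b ∉ swapMap a b A₁ A₂ S := Finset.notMem_erase _ _
  have haS' : a ∉ swapMap a b A₁ A₂ S := by
    simp only [swapMap, Finset.mem_erase, Finset.mem_union, Finset.mem_sdiff]
    rintro ⟨-, (⟨-, h⟩ | h)⟩
    · exact h haA₁
    · exact haA₂ h
  have hJ' : insert A₂ (J.erase A₁) ⊆ blocks.erase A₁ := by
    intro B hB
    rcases Finset.mem_insert.mp hB with h | h
    · subst h; exact Finset.mem_erase.mpr ⟨Ne.symm hA₁₂, hA₂⟩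
    · exact Finset.mem_erase.mpr ⟨(Finset.mem_erase.mp h).1,
        hJb (Finset.mem_of_mem_erase h)⟩
  have hsub : swapMap a b A₁ A₂ S ⊆ A \ {a, b} := by
    intro x hx
    have hxA : x ∈ A := by
      have hx' : x ∈ insert b (swapMap a b A₁ A₂ S) := Finset.mem_insert_of_mem hx
      rw [heq] at hx'
      obtain ⟨B, hB, hxB⟩ := Finset.mem_sup.mp hx'
      have hBblocks : B ∈ blocks := by
        rcases Finset.mem_insert.mp hB with h | h
        · exact h ▸ hA₂
        · exact hJb (Finset.mem_of_mem_erase h)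
      rw [← hcover]
      exact Finset.le_sup (f := id) hBblocks hxB
    refine Finset.mem_sdiff.mpr ⟨hxA, ?_⟩
    simp only [Finset.mem_insert, Finset.mem_singleton]
    rintro (rfl | rfl)
    · exact haS' hx
    · exact hbS' hx
  have haS : a ∉ S := fun h => by
    have := Finset.mem_sdiff.mp (hS h)
    simp at this
  have hinv : swapMap b a A₂ A₁ (swapMap a b A₁ A₂ S) = S := by
    have h2 := key_aux blocks hdisj b a A₂ A₁ hA₂ haA₁ (swapMap a b A₁ A₂ S)
      (insert A₂ (J.erase A₁)) (hJ'.trans (Finset.erase_subset _ _))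
      (Finset.mem_insert_self _ _) heq
    have e1 : (insert A₂ (J.erase A₁)).erase A₂ = J.erase A₁ :=
      Finset.erase_insert (fun h => hA₂J (Finset.mem_of_mem_erase h))
    rw [e1, Finset.insert_erase hA₁J, ← hSJ] at h2
    have ha2 : a ∉ swapMap b a A₂ A₁ (swapMap a b A₁ A₂ S) := Finset.notMem_erase _ _
    calc swapMap b a A₂ A₁ (swapMap a b A₁ A₂ S)
        = (insert a (swapMap b a A₂ A₁ (swapMap a b A₁ A₂ S))).erase a :=
          (Finset.erase_insert ha2).symm
      _ = (insert a S).erase a := by rw [h2]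
      _ = S := Finset.erase_insert haS
  exact ⟨hsub, heq, hJ', hinv⟩

/-- Under an exchangeable lineage model at the node `v = MRCA(A)` of a species tree,
condition on the partition of the clade `A` into blocks (the lineages entering `v`),
with `a ∈ A₁`, `b ∈ A₂` for distinct blocks.  Let `C` be a nonempty set of taxa disjoint
from `A`, and let `q D` denote the conditional probability that `D` is a gene tree clade
given the partition.  Hypotheses: (support) `q (S∪{a}∪C) ≠ 0` forces `S∪{a}` to be a
union of blocks containing `A₁` (and likewise for `b`, `A₂`); (exchangeability) replacing
the block `A₁` by `A₂` in such a union of blocks leaves `q` unchanged.  Then the swap map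
is a bijection between the subsets `S ⊆ A∖{a,b}` contributing nonzero terms to the two
sums, with equal corresponding conditional probabilities; hence
`Σ_{S⊆A'} q(S∪{a}∪C) = Σ_{S⊆A'} q(S∪{b}∪C)`. -/
theorem conditional_clade_sums_eq
    (A : Finset α) (hA : 2 ≤ A.card)
    (a b : α) (ha : a ∈ A) (hb : b ∈ A) (hab : a ≠ b)
    (blocks : Finset (Finset α))
    (hne : ∀ B ∈ blocks, B.Nonempty)
    (hdisj : ∀ B₁ ∈ blocks, ∀ B₂ ∈ blocks, B₁ ≠ B₂ → Disjoint B₁ B₂)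
    (hcover : blocks.sup id = A)
    (A₁ A₂ : Finset α) (hA₁ : A₁ ∈ blocks) (hA₂ : A₂ ∈ blocks) (hA₁₂ : A₁ ≠ A₂)
    (haA₁ : a ∈ A₁) (hbA₂ : b ∈ A₂)
    (C : Finset α) (hC : C.Nonempty) (hCA : Disjoint C A)
    (q : Finset α → ℝ)
    (hsupp_a : ∀ S ⊆ A \ {a, b}, q (insert a S ∪ C) ≠ 0 →
      ∃ J ⊆ blocks, A₁ ∈ J ∧ insert a S = J.sup id)
    (hsupp_b : ∀ S ⊆ A \ {a, b}, q (insert b S ∪ C) ≠ 0 →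
      ∃ J ⊆ blocks, A₂ ∈ J ∧ insert b S = J.sup id)
    (hexch : ∀ J ⊆ blocks, A₁ ∈ J → A₂ ∉ J →
      q (J.sup id ∪ C) = q ((insert A₂ (J.erase A₁)).sup id ∪ C)) :
    (∀ S ⊆ A \ {a, b},
        (∃ J ⊆ blocks.erase A₂, A₁ ∈ J ∧ insert a S = J.sup id) →
        q (insert a S ∪ C) = q (insert b (swapMap a b A₁ A₂ S) ∪ C)) ∧
    Set.BijOn (swapMap a b A₁ A₂)
      {S : Finset α | S ⊆ A \ {a, b} ∧
        ∃ J ⊆ blocks.erase A₂, A₁ ∈ J ∧ insert a S = J.sup id}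
      {S' : Finset α | S' ⊆ A \ {a, b} ∧
        ∃ J ⊆ blocks.erase A₁, A₂ ∈ J ∧ insert b S' = J.sup id} ∧
    ∑ S ∈ (A \ {a, b}).powerset, q (insert a S ∪ C)
      = ∑ S ∈ (A \ {a, b}).powerset, q (insert b S ∪ C) := by
  have hpair : ({b, a} : Finset α) = {a, b} := Finset.pair_comm b a
  -- reverse exchangeability
  have hexch' : ∀ J' ⊆ blocks, A₂ ∈ J' → A₁ ∉ J' →
      q (J'.sup id ∪ C) = q ((insert A₁ (J'.erase A₂)).sup id ∪ C) := by
    intro J' hJ' hA₂J' hA₁J'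
    have hJsub : insert A₁ (J'.erase A₂) ⊆ blocks :=
      Finset.insert_subset hA₁ ((Finset.erase_subset _ _).trans hJ')
    have hA₂J : A₂ ∉ insert A₁ (J'.erase A₂) := by
      simp [Ne.symm hA₁₂, Finset.mem_erase]
    have h := hexch _ hJsub (Finset.mem_insert_self _ _) hA₂J
    have e : (insert A₁ (J'.erase A₂)).erase A₁ = J'.erase A₂ :=
      Finset.erase_insert (fun h => hA₁J' (Finset.mem_of_mem_erase h))
    rw [e, Finset.insert_erase hA₂J'] at h
    exact h.symm
  -- upgrade support statements to exclude the other block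
  have upg_a : ∀ S ⊆ A \ {a, b}, (∃ J ⊆ blocks, A₁ ∈ J ∧ insert a S = J.sup id) →
      ∃ J ⊆ blocks.erase A₂, A₁ ∈ J ∧ insert a S = J.sup id := by
    rintro S hS ⟨J, hJ, hA₁J, hSJ⟩
    have hbS : b ∉ insert a S := by
      simp only [Finset.mem_insert]
      rintro (rfl | h)
      · exact hab rfl
      · have := Finset.mem_sdiff.mp (hS h); simp at this
    have hA₂J : A₂ ∉ J := fun h =>
      hbS (by rw [hSJ]; exact Finset.le_sup (f := id) h hbA₂)
    exact ⟨J, Finset.subset_erase.mpr ⟨hJ, hA₂J⟩, hA₁J, hSJ⟩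
  have upg_b : ∀ S ⊆ A \ {a, b}, (∃ J ⊆ blocks, A₂ ∈ J ∧ insert b S = J.sup id) →
      ∃ J ⊆ blocks.erase A₁, A₂ ∈ J ∧ insert b S = J.sup id := by
    rintro S hS ⟨J, hJ, hA₂J, hSJ⟩
    have haS : a ∉ insert b S := by
      simp only [Finset.mem_insert]
      rintro (rfl | h)
      · exact hab rfl
      · have := Finset.mem_sdiff.mp (hS h); simp at this
    have hA₁J : A₁ ∉ J := fun h =>
      haS (by rw [hSJ]; exact Finset.le_sup (f := id) h haA₁)
    exact ⟨J, Finset.subset_erase.mpr ⟨hJ, hA₁J⟩, hA₂J, hSJ⟩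
  -- main pointwise equalities
  have main_a : ∀ S ⊆ A \ {a, b}, ∀ J ⊆ blocks.erase A₂, A₁ ∈ J →
      insert a S = J.sup id →
      q (insert a S ∪ C) = q (insert b (swapMap a b A₁ A₂ S) ∪ C) := by
    intro S hS J hJ hA₁J hSJ
    obtain ⟨-, heq, -, -⟩ := pack_aux A blocks hdisj hcover a b A₁ A₂ hA₁ hA₂ hA₁₂
      haA₁ hbA₂ S hS J hJ hA₁J hSJ
    have hA₂J : A₂ ∉ J := fun h => (Finset.mem_erase.mp (hJ h)).1 rfl
    rw [hSJ, heq]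
    exact hexch J (hJ.trans (Finset.erase_subset _ _)) hA₁J hA₂J
  have main_b : ∀ T ⊆ A \ {a, b}, ∀ J ⊆ blocks.erase A₁, A₂ ∈ J →
      insert b T = J.sup id →
      q (insert b T ∪ C) = q (insert a (swapMap b a A₂ A₁ T) ∪ C) := by
    intro T hT J hJ hA₂J hTJ
    have hT' : T ⊆ A \ {b, a} := by rwa [hpair]
    obtain ⟨-, heq, -, -⟩ := pack_aux A blocks hdisj hcover b a A₂ A₁ hA₂ hA₁
      (Ne.symm hA₁₂) hbA₂ haA₁ T hT' J hJ hA₂J hTJ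
    have hA₁J : A₁ ∉ J := fun h => (Finset.mem_erase.mp (hJ h)).1 rfl
    rw [hTJ, heq]
    exact hexch' J (hJ.trans (Finset.erase_subset _ _)) hA₂J hA₁J
  refine ⟨fun S hS h => by obtain ⟨J, hJ, h1, h2⟩ := h; exact main_a S hS J hJ h1 h2,
    ?_, ?_⟩
  · -- bijectivity
    refine Set.InvOn.bijOn (f' := swapMap b a A₂ A₁) ⟨?_, ?_⟩ ?_ ?_
    · rintro S ⟨hS, J, hJ, hA₁J, hSJ⟩
      exact (pack_aux A blocks hdisj hcover a b A₁ A₂ hA₁ hA₂ hA₁₂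
        haA₁ hbA₂ S hS J hJ hA₁J hSJ).2.2.2
    · rintro T ⟨hT, J, hJ, hA₂J, hTJ⟩
      have hT' : T ⊆ A \ {b, a} := by rwa [hpair]
      exact (pack_aux A blocks hdisj hcover b a A₂ A₁ hA₂ hA₁ (Ne.symm hA₁₂)
        hbA₂ haA₁ T hT' J hJ hA₂J hTJ).2.2.2
    · rintro S ⟨hS, J, hJ, hA₁J, hSJ⟩
      obtain ⟨hsub, heq, hJ', -⟩ := pack_aux A blocks hdisj hcover a b A₁ A₂ hA₁ hA₂
        hA₁₂ haA₁ hbA₂ S hS J hJ hA₁J hSJ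
      exact ⟨hsub, insert A₂ (J.erase A₁), hJ', Finset.mem_insert_self _ _, heq⟩
    · rintro T ⟨hT, J, hJ, hA₂J, hTJ⟩
      have hT' : T ⊆ A \ {b, a} := by rwa [hpair]
      obtain ⟨hsub, heq, hJ', -⟩ := pack_aux A blocks hdisj hcover b a A₂ A₁ hA₂ hA₁
        (Ne.symm hA₁₂) hbA₂ haA₁ T hT' J hJ hA₂J hTJ
      rw [hpair] at hsub
      exact ⟨hsub, insert A₁ (J.erase A₂), hJ', Finset.mem_insert_self _ _, heq⟩
  · -- sum equality
    rw [← Finset.sum_filter_ne_zero (A \ {a, b}).powerset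
      (f := fun S => q (insert a S ∪ C)),
      ← Finset.sum_filter_ne_zero (A \ {a, b}).powerset
      (f := fun S => q (insert b S ∪ C))]
    refine Finset.sum_nbij' (swapMap a b A₁ A₂) (swapMap b a A₂ A₁) ?_ ?_ ?_ ?_ ?_
    · intro S hS
      obtain ⟨hS, hq⟩ := Finset.mem_filter.mp hS
      have hS := Finset.mem_powerset.mp hS
      obtain ⟨J, hJ, hA₁J, hSJ⟩ := upg_a S hS (hsupp_a S hS hq)
      obtain ⟨hsub, heq, hJ', -⟩ := pack_aux A blocks hdisj hcover a b A₁ A₂ hA₁ hA₂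
        hA₁₂ haA₁ hbA₂ S hS J hJ hA₁J hSJ
      refine Finset.mem_filter.mpr ⟨Finset.mem_powerset.mpr hsub, ?_⟩
      rw [← main_a S hS J hJ hA₁J hSJ]
      exact hq
    · intro T hT
      obtain ⟨hT, hq⟩ := Finset.mem_filter.mp hT
      have hT := Finset.mem_powerset.mp hT
      obtain ⟨J, hJ, hA₂J, hTJ⟩ := upg_b T hT (hsupp_b T hT hq)
      have hT' : T ⊆ A \ {b, a} := by rwa [hpair]
      obtain ⟨hsub, heq, hJ', -⟩ := pack_aux A blocks hdisj hcover b a A₂ A₁ hA₂ hA₁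
        (Ne.symm hA₁₂) hbA₂ haA₁ T hT' J hJ hA₂J hTJ
      rw [hpair] at hsub
      refine Finset.mem_filter.mpr ⟨Finset.mem_powerset.mpr hsub, ?_⟩
      rw [← main_b T hT J hJ hA₂J hTJ]
      exact hq
    · intro S hS
      obtain ⟨hS, hq⟩ := Finset.mem_filter.mp hS
      have hS := Finset.mem_powerset.mp hS
      obtain ⟨J, hJ, hA₁J, hSJ⟩ := upg_a S hS (hsupp_a S hS hq)
      exact (pack_aux A blocks hdisj hcover a b A₁ A₂ hA₁ hA₂ hA₁₂
        haA₁ hbA₂ S hS J hJ hA₁J hSJ).2.2.2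
    · intro T hT
      obtain ⟨hT, hq⟩ := Finset.mem_filter.mp hT
      have hT := Finset.mem_powerset.mp hT
      obtain ⟨J, hJ, hA₂J, hTJ⟩ := upg_b T hT (hsupp_b T hT hq)
      have hT' : T ⊆ A \ {b, a} := by rwa [hpair]
      exact (pack_aux A blocks hdisj hcover b a A₂ A₁ hA₂ hA₁ (Ne.symm hA₁₂)
        hbA₂ haA₁ T hT' J hJ hA₂J hTJ).2.2.2
    · intro S hS
      obtain ⟨hS, hq⟩ := Finset.mem_filter.mp hS
      have hS := Finset.mem_powerset.mp hS
      obtain ⟨J, hJ, hA₁J, hSJ⟩ := upg_a S hS (hsupp_a S hS hq)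
      exact main_a S hS J hJ hA₁J hSJ
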